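/- Let f be a function on the upper half plane, k ∈ ℤ, C₁ > 0, C₂ ∈ ℂ with C₂ ≠ 0, and M, a > 0. Assume f(−C₁/z) = C₂ z^k f(z) for all z in the upper half plane, and |f(z)| ≤ M e^{−a·Im z} for all z in the upper half plane. Then for all T > 0 and t > 0, with α = −1 + i/T: |f(αt)| ≤ (M/|C₂|) · (|α| t)^{−k} · exp( −a C₁ / (T t |α|²) ). -/

import Mathlib

open Real

theorem stmt11 (f : ℂ → ℂ) (k : ℤ) (C₁ : ℝ) (hC₁ : 0 < C₁) (C₂ : ℂ) (hC₂ : C₂ ≠ 0)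
    (M a : ℝ) (hM : 0 < M) (ha : 0 < a)
    (hfe : ∀ z : ℂ, 0 < z.im → f (-(C₁ : ℂ) / z) = C₂ * z ^ k * f z)
    (hfb : ∀ z : ℂ, 0 < z.im → ‖f z‖ ≤ M * Real.exp (-a * z.im)) :
    ∀ T : ℝ, 0 < T → ∀ t : ℝ, 0 < t → ∀ α : ℂ, α = -1 + Complex.I / T →
      ‖f (α * t)‖ ≤
        (M / ‖C₂‖) * (‖α‖ * t) ^ (-k) * Real.exp (-a * C₁ / (T * t * ‖α‖ ^ 2)) := by
  intro T hT t ht α hα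
  have hαim : α.im = 1 / T := by
    rw [hα]
    simp [Complex.add_im, Complex.div_im, Complex.normSq_apply, Complex.div_re]
  have hzim : (α * (t : ℂ)).im = t / T := by
    simp [Complex.mul_im, hαim]
    ring
  have hzim_pos : 0 < (α * (t : ℂ)).im := by rw [hzim]; positivity
  have hα0 : α ≠ 0 := by
    intro h
    rw [h] at hαim
    simp at hαim
    exact absurd hαim.symm hT.ne'
  have hαnorm_pos : 0 < ‖α‖ := norm_pos_iff.2 hα0
  have hnorm : ‖α * (t : ℂ)‖ = ‖α‖ * t := by
    rw [norm_mul, Complex.norm_real, Real.norm_of_nonneg ht.le]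
  have hnormSq : Complex.normSq (α * (t : ℂ)) = (‖α‖ * t) ^ 2 := by
    rw [Complex.normSq_eq_norm_sq, hnorm]
  have him_w : (-(C₁ : ℂ) / (α * (t : ℂ))).im = C₁ / (T * t * ‖α‖ ^ 2) := by
    rw [Complex.div_im]
    simp only [Complex.neg_im, Complex.neg_re, Complex.ofReal_im, Complex.ofReal_re, neg_zero,
      zero_mul, zero_div, hzim, hnormSq]
    field_simp [ht.ne', hT.ne', hαnorm_pos.ne']
    ring
  have him_pos : 0 < (-(C₁ : ℂ) / (α * (t : ℂ))).im := by
    rw [him_w]; positivity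
  have hw := hfb (-(C₁ : ℂ) / (α * (t : ℂ))) him_pos
  rw [hfe (α * (t : ℂ)) hzim_pos] at hw
  rw [norm_mul, norm_mul, norm_zpow, hnorm] at hw
  have hE : -a * ((-(C₁ : ℂ) / (α * (t : ℂ))).im) = -a * C₁ / (T * t * ‖α‖ ^ 2) := by
    rw [him_w]; ring
  rw [hE] at hw
  have hpos : 0 < ‖C₂‖ * (‖α‖ * t) ^ k :=
    mul_pos (norm_pos_iff.2 hC₂) (zpow_pos (mul_pos hαnorm_pos ht) k)
  have hrhs : (M / ‖C₂‖) * (‖α‖ * t) ^ (-k) * Real.exp (-a * C₁ / (T * t * ‖α‖ ^ 2)) =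
      M * Real.exp (-a * C₁ / (T * t * ‖α‖ ^ 2)) / (‖C₂‖ * (‖α‖ * t) ^ k) := by
    rw [zpow_neg]
    field_simp
  rw [hrhs, le_div_iff₀ hpos, mul_comm]
  exact hw
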